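/- Fix λ > 0, α ∈ [0,1], t > 0. Define p(t; y₀, ξ) for ξ·y₀ ≤ 0 by p(t;y₀,ξ) = (1+(2α-1)sgn(ξ)) · (e^{-2λ|ξ|}/√(2πt)) · [exp(-(|ξ|+|y₀|-λt)²/(2t)) + λ∫_{|ξ|+|y₀|}^∞ exp(-(u-λt)²/(2t)) du]. Then as t → ∞, p(t; y₀, ξ) → 2αλ e^{-2λξ}·1_{ξ>0} + 2(1-α)λ e^{2λξ}·1_{ξ≤0} for every fixed ξ with ξ·y₀ ≤ 0, ξ ≠ 0. -/

import Mathlib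

open Real MeasureTheory Filter Set

lemma aux_int_Ioi_add (g : ℝ → ℝ) (a c : ℝ) :
    ∫ x in Set.Ioi a, g (x + c) = ∫ x in Set.Ioi (a + c), g x := by
  rw [← integral_indicator measurableSet_Ioi, ← integral_indicator measurableSet_Ioi,
    ← integral_add_right_eq_self (fun x => (Set.Ioi (a + c)).indicator g x) c]
  congr 1
  ext x
  rw [show (Set.Ioi (a+c)).indicator g (x + c)
      = ((· + c) ⁻¹' Set.Ioi (a+c)).indicator (g ∘ (· + c)) x from
    (Set.indicator_comp_right (· + c)).symm]
  rw [Set.preimage_add_const_Ioi, add_sub_cancel_right]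
  rfl

lemma aux_sqrt_atTop : Tendsto Real.sqrt atTop atTop := by
  refine tendsto_atTop_atTop.2 fun b => ⟨max 0 b ^ 2, fun t ht => ?_⟩
  calc b ≤ max 0 b := le_max_right 0 b
  _ = Real.sqrt (max 0 b ^ 2) := (Real.sqrt_sq (le_max_left 0 b)).symm
  _ ≤ Real.sqrt t := Real.sqrt_le_sqrt ht

lemma aux_g_integrable : Integrable (fun v : ℝ => Real.exp (-v ^ 2 / 2)) := by
  have := integrable_exp_neg_mul_sq (b := 1/2) (by norm_num)
  convert this using 2 with v
  ring_nf

lemma aux_g_total : ∫ v : ℝ, Real.exp (-v ^ 2 / 2) = Real.sqrt (2 * Real.pi) := by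
  have := integral_gaussian (1/2)
  rw [show Real.pi / (1/2 : ℝ) = 2 * Real.pi by ring] at this
  rw [← this]
  congr 1 with v
  ring_nf

lemma aux_F_tendsto :
    Tendsto (fun c => ∫ v in Set.Ioi c, Real.exp (-v ^ 2 / 2)) atBot
      (nhds (Real.sqrt (2 * Real.pi))) := by
  have hInt := aux_g_integrable
  have hsplit : ∀ c : ℝ, ∫ v in Set.Ioi c, Real.exp (-v ^ 2 / 2)
      = Real.sqrt (2 * Real.pi) - ∫ v in Set.Iic c, Real.exp (-v ^ 2 / 2) := by
    intro c
    have := intervalIntegral.integral_Iic_add_Ioi (b := c) hInt.integrableOn hInt.integrableOn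
    rw [← aux_g_total]
    linarith [this]
  have hIic : Tendsto (fun c => ∫ v in Set.Iic c, Real.exp (-v ^ 2 / 2)) atBot (nhds 0) := by
    apply squeeze_zero' (Eventually.of_forall fun c =>
      setIntegral_nonneg measurableSet_Iic fun v _ => (Real.exp_pos _).le)
      _ Real.tendsto_exp_atBot
    filter_upwards [eventually_le_atBot (-2 : ℝ)] with c hc
    calc ∫ v in Set.Iic c, Real.exp (-v ^ 2 / 2) ≤ ∫ v in Set.Iic c, Real.exp v := by
          apply setIntegral_mono_on hInt.integrableOn (integrableOn_exp_Iic c)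
            measurableSet_Iic
          intro v hv
          apply Real.exp_le_exp.2
          have hv2 : v ≤ -2 := le_trans hv hc
          nlinarith
      _ = Real.exp c := integral_exp_Iic c
  simp only [hsplit]
  simpa using hIic.const_sub (Real.sqrt (2 * Real.pi))

lemma aux_tail (lam a : ℝ) (hlam : 0 < lam) (ha : 0 ≤ a) :
    Tendsto (fun t => (Real.exp (-(a - lam * t) ^ 2 / (2 * t)) +
      lam * ∫ u in Set.Ioi a, Real.exp (-(u - lam * t) ^ 2 / (2 * t))) /
      Real.sqrt (2 * Real.pi * t)) atTop (nhds lam) := by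
  have hπ : (0:ℝ) < Real.sqrt (2 * Real.pi) := Real.sqrt_pos.2 (by positivity)
  -- first term tends to 0
  have h1 : Tendsto (fun t => Real.exp (-(a - lam * t) ^ 2 / (2 * t)) /
      Real.sqrt (2 * Real.pi * t)) atTop (nhds 0) := by
    have hg : Tendsto (fun t : ℝ => Real.exp (-(lam ^ 2 / 8 * t))) atTop (nhds 0) := by
      exact Real.tendsto_exp_neg_atTop_nhds_zero.comp
        (Tendsto.const_mul_atTop (by positivity) tendsto_id)
    apply squeeze_zero' (Eventually.of_forall fun t => by positivity) _ hg
    filter_upwards [eventually_ge_atTop (1:ℝ), eventually_ge_atTop (2 * a / lam)] with t ht1 ht2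
    have ht0 : (0:ℝ) < t := lt_of_lt_of_le one_pos ht1
    have hlamt : 2 * a ≤ lam * t := by
      rw [div_le_iff₀ hlam] at ht2; nlinarith
    have hsq : (1:ℝ) ≤ Real.sqrt (2 * Real.pi * t) := by
      rw [show (1:ℝ) = Real.sqrt 1 from (Real.sqrt_one).symm]
      apply Real.sqrt_le_sqrt
      nlinarith [Real.pi_gt_three]
    calc Real.exp (-(a - lam * t) ^ 2 / (2 * t)) / Real.sqrt (2 * Real.pi * t)
        ≤ Real.exp (-(a - lam * t) ^ 2 / (2 * t)) :=
          div_le_self (Real.exp_pos _).le hsq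
      _ ≤ Real.exp (-(lam ^ 2 / 8 * t)) := by
          apply Real.exp_le_exp.2
          rw [neg_div]
          apply neg_le_neg
          rw [le_div_iff₀ (by positivity : (0:ℝ) < 2 * t)]
          nlinarith [sq_nonneg (lam * t - 2 * a), mul_nonneg ha (sub_nonneg.2 hlamt)]
  -- second term tends to lam
  have h2 : Tendsto (fun t => lam * (∫ u in Set.Ioi a,
      Real.exp (-(u - lam * t) ^ 2 / (2 * t))) / Real.sqrt (2 * Real.pi * t))
      atTop (nhds lam) := by
    have hc : Tendsto (fun t => (a - lam * t) / Real.sqrt t) atTop atBot := by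
      apply Tendsto.congr'
        (f₁ := fun t => a * (Real.sqrt t)⁻¹ + -(lam * Real.sqrt t))
      · filter_upwards [eventually_ge_atTop (1:ℝ)] with t ht1
        have hs : (0:ℝ) < Real.sqrt t := Real.sqrt_pos.2 (lt_of_lt_of_le one_pos ht1)
        have h2 : Real.sqrt t ^ 2 = t := Real.sq_sqrt (by linarith)
        field_simp
        nlinarith [h2]
      · apply Tendsto.add_atBot (C := a * 0)
        · exact (tendsto_inv_atTop_zero.comp aux_sqrt_atTop).const_mul a
        · exact tendsto_neg_atTop_atBot.comp (Tendsto.const_mul_atTop hlam aux_sqrt_atTop)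
    have hF := (aux_F_tendsto.comp hc).const_mul (lam / Real.sqrt (2 * Real.pi))
    rw [div_mul_cancel₀ _ (ne_of_gt hπ)] at hF
    apply Tendsto.congr' _ hF
    filter_upwards [eventually_ge_atTop (1:ℝ)] with t ht1
    have ht0 : (0:ℝ) < t := lt_of_lt_of_le one_pos ht1
    have hs : (0:ℝ) < Real.sqrt t := Real.sqrt_pos.2 ht0
    have hsq : Real.sqrt t ^ 2 = t := Real.sq_sqrt ht0.le
    have hI : (∫ u in Set.Ioi a, Real.exp (-(u - lam * t) ^ 2 / (2 * t)))
        = Real.sqrt t * ∫ v in Set.Ioi ((a - lam * t) / Real.sqrt t),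
            Real.exp (-v ^ 2 / 2) := by
      have e1 : (∫ u in Set.Ioi a, Real.exp (-(u - lam * t) ^ 2 / (2 * t)))
          = ∫ u in Set.Ioi a,
              (fun u => Real.exp (-(1 / Real.sqrt t * u) ^ 2 / 2)) (u + -(lam * t)) := by
        refine setIntegral_congr_fun measurableSet_Ioi fun u _ => ?_
        simp only []
        congr 1
        rw [mul_pow, div_pow, one_pow, hsq]
        field_simp
        ring
      rw [e1, aux_int_Ioi_add (fun u => Real.exp (-(1 / Real.sqrt t * u) ^ 2 / 2)) a
        (-(lam * t)),
        integral_comp_mul_left_Ioi (fun v => Real.exp (-v ^ 2 / 2)) _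
          (show (0:ℝ) < 1 / Real.sqrt t by positivity)]
      rw [smul_eq_mul, one_div, inv_inv,
        show (Real.sqrt t)⁻¹ * (a + -(lam * t)) = (a - lam * t) / Real.sqrt t by
          rw [← div_eq_inv_mul]; ring_nf]
    rw [hI, Real.sqrt_mul (by positivity) t]
    field_simp
    ring
    rfl
  have := h1.add h2
  rw [zero_add] at this
  apply Tendsto.congr _ this
  intro t
  rw [← add_div]

/-- Left-continuous signum: `1` for positive arguments, `-1` otherwise. -/
noncomputable def sgnL (x : ℝ) : ℝ := if 0 < x then 1 else -1

/-- The off-diagonal branch (`ξ·y₀ ≤ 0`) of the transition density of skew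
bang-bang Brownian motion. -/
noncomputable def pOff (lam α t y₀ ξ : ℝ) : ℝ :=
  (1 + (2 * α - 1) * sgnL ξ) * (Real.exp (-(2 * lam * |ξ|)) / Real.sqrt (2 * Real.pi * t)) *
    (Real.exp (-(|ξ| + |y₀| - lam * t) ^ 2 / (2 * t)) +
      lam * ∫ u in Set.Ioi (|ξ| + |y₀|), Real.exp (-(u - lam * t) ^ 2 / (2 * t)))

/-- The stationary double-exponential density. -/
noncomputable def pinf (lam α ξ : ℝ) : ℝ :=
  if 0 < ξ then 2 * α * lam * Real.exp (-(2 * lam * ξ))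
  else 2 * (1 - α) * lam * Real.exp (2 * lam * ξ)

/-- As `t → ∞`, the off-diagonal transition density `p(t; y₀, ξ)` converges to
the stationary density `p_∞(ξ)`, for every fixed `ξ ≠ 0` with `ξ·y₀ ≤ 0`. -/
theorem stmt_12 (lam α y₀ ξ : ℝ) (hlam : 0 < lam) (hα : α ∈ Set.Icc (0 : ℝ) 1)
    (hξy : ξ * y₀ ≤ 0) (hξ : ξ ≠ 0) :
    Tendsto (fun t => pOff lam α t y₀ ξ) atTop (nhds (pinf lam α ξ)) := by
  set a := |ξ| + |y₀| with hadef
  have ha : 0 ≤ a := by positivity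
  set C := (1 + (2 * α - 1) * sgnL ξ) * Real.exp (-(2 * lam * |ξ|)) with hC
  have heq : (fun t => pOff lam α t y₀ ξ) = fun t =>
      C * ((Real.exp (-(a - lam * t) ^ 2 / (2 * t)) +
        lam * ∫ u in Set.Ioi a, Real.exp (-(u - lam * t) ^ 2 / (2 * t))) /
        Real.sqrt (2 * Real.pi * t)) := by
    funext t
    unfold pOff
    rw [hC, ← hadef]
    ring
  have hp : pinf lam α ξ = C * lam := by
    rcases lt_or_ge 0 ξ with hpos | hneg
    · rw [pinf, if_pos hpos, hC, sgnL, if_pos hpos, abs_of_pos hpos]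
      ring
    · have hlt : ξ < 0 := lt_of_le_of_ne hneg hξ
      rw [pinf, if_neg (not_lt.2 hneg), hC, sgnL, if_neg (not_lt.2 hneg),
        abs_of_neg hlt, show -(2 * lam * -ξ) = 2 * lam * ξ by ring]
      ring
  rw [heq, hp]
  exact (aux_tail lam a hlam ha).const_mul C
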